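/- Let R be a quasi-unital ring, i : R → R' an extension with R' smooth as an R-bimodule, and let M be a left R'-module that is smooth as a left R-module (via i). Then M is smooth as a left R'-module: the canonical map R' ⊗_{R'} M → M is an isomorphism. -/

import Mathlib

open TensorProduct LinearMap

section Bar

variable (A : Type) [NonUnitalRing A] [Module ℂ A] [SMulCommClass ℂ A A]
  [IsScalarTower ℂ A A]

/-- The bar differential `A ⊗ A ⊗ A → A ⊗ A`. -/
noncomputable def barD : (A ⊗[ℂ] (A ⊗[ℂ] A)) →ₗ[ℂ] A ⊗[ℂ] A :=
  (rTensor A (mul' ℂ A)) ∘ₗ (TensorProduct.assoc ℂ A A A).symm.toLinearMap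
    - lTensor A (mul' ℂ A)

/-- `A` is quasi-unital: the canonical map `A ⊗_A A → A` is an isomorphism. -/
def IsQuasiUnital : Prop :=
  ∃ f : ((A ⊗[ℂ] A) ⧸ LinearMap.range (barD A)) →ₗ[ℂ] A,
    f ∘ₗ (LinearMap.range (barD A)).mkQ = mul' ℂ A ∧ Function.Bijective f

variable {M : Type} [AddCommGroup M] [Module ℂ M]

/-- The bar differential `A ⊗ A ⊗ M → A ⊗ M` for a left module with bilinear
action `act`. -/
noncomputable def barDM (act : A →ₗ[ℂ] M →ₗ[ℂ] M) :
    (A ⊗[ℂ] (A ⊗[ℂ] M)) →ₗ[ℂ] A ⊗[ℂ] M :=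
  (rTensor M (mul' ℂ A)) ∘ₗ (TensorProduct.assoc ℂ A A M).symm.toLinearMap
    - lTensor A (TensorProduct.lift act)

/-- `M` is a smooth left `A`-module: the canonical map `A ⊗_A M → M` is an
isomorphism. -/
def IsSmoothMod (act : A →ₗ[ℂ] M →ₗ[ℂ] M) : Prop :=
  ∃ f : ((A ⊗[ℂ] M) ⧸ LinearMap.range (barDM A act)) →ₗ[ℂ] M,
    f ∘ₗ (LinearMap.range (barDM A act)).mkQ = TensorProduct.lift act ∧
    Function.Bijective f

end Bar

section Ext

variable (R R' : Type)
  [NonUnitalRing R] [Module ℂ R] [SMulCommClass ℂ R R] [IsScalarTower ℂ R R]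
  [NonUnitalRing R'] [Module ℂ R'] [SMulCommClass ℂ R' R'] [IsScalarTower ℂ R' R']
  (i : R →ₗ[ℂ] R')

/-- The left action `R ⊗ R' → R'`, `r ⊗ r' ↦ i(r)·r'`. -/
noncomputable def actL : R ⊗[ℂ] R' →ₗ[ℂ] R' := (mul' ℂ R') ∘ₗ rTensor R' i

/-- The right action `R' ⊗ R → R'`, `r' ⊗ r ↦ r'·i(r)`. -/
noncomputable def actR : R' ⊗[ℂ] R →ₗ[ℂ] R' := (mul' ℂ R') ∘ₗ lTensor R' i

/-- The bar differential `R ⊗ R ⊗ R' → R ⊗ R'` for the left `R`-module `R'`. -/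
noncomputable def barDL : (R ⊗[ℂ] (R ⊗[ℂ] R')) →ₗ[ℂ] R ⊗[ℂ] R' :=
  (rTensor R' (mul' ℂ R)) ∘ₗ (TensorProduct.assoc ℂ R R R').symm.toLinearMap
    - lTensor R (actL R R' i)

/-- The bar differential `R' ⊗ R ⊗ R → R' ⊗ R` for the right `R`-module `R'`. -/
noncomputable def barDR : (R' ⊗[ℂ] (R ⊗[ℂ] R)) →ₗ[ℂ] R' ⊗[ℂ] R :=
  (rTensor R (actR R R' i)) ∘ₗ (TensorProduct.assoc ℂ R' R R).symm.toLinearMap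
    - lTensor R' (mul' ℂ R)

/-- The left relation differential for `R ⊗_R R' ⊗_R R`. -/
noncomputable def barDT₁ : (R ⊗[ℂ] (R ⊗[ℂ] (R' ⊗[ℂ] R))) →ₗ[ℂ] R ⊗[ℂ] (R' ⊗[ℂ] R) :=
  (rTensor (R' ⊗[ℂ] R) (mul' ℂ R)) ∘ₗ
      (TensorProduct.assoc ℂ R R (R' ⊗[ℂ] R)).symm.toLinearMap
    - lTensor R ((rTensor R (actL R R' i)) ∘ₗ
        (TensorProduct.assoc ℂ R R' R).symm.toLinearMap)

/-- The right relation differential for `R ⊗_R R' ⊗_R R`. -/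
noncomputable def barDT₂ : (R ⊗[ℂ] (R' ⊗[ℂ] (R ⊗[ℂ] R))) →ₗ[ℂ] R ⊗[ℂ] (R' ⊗[ℂ] R) :=
  lTensor R (barDR R R' i)

/-- The relations submodule for `R ⊗_R R' ⊗_R R`. -/
noncomputable def twoSidedRel : Submodule ℂ (R ⊗[ℂ] (R' ⊗[ℂ] R)) :=
  LinearMap.range (barDT₁ R R' i) ⊔ LinearMap.range (barDT₂ R R' i)

/-- The two-sided action map `R ⊗ R' ⊗ R → R'`, `r ⊗ r' ⊗ s ↦ i(r)·r'·i(s)`. -/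
noncomputable def actT : (R ⊗[ℂ] (R' ⊗[ℂ] R)) →ₗ[ℂ] R' :=
  (actL R R' i) ∘ₗ lTensor R (actR R R' i)

/-- Let `R` be quasi-unital, `i : R → R'` an extension with `R'` smooth as an
`R`-bimodule, and `M` a left `R'`-module that is smooth as a left `R`-module via `i`.
Then `M` is smooth as a left `R'`-module: `R' ⊗_{R'} M → M` is an isomorphism. -/
theorem smooth_over_extension
    (hi : ∀ a b : R, i (a * b) = i a * i b)
    (hR : IsQuasiUnital R)
    (hL : ∃ fL : ((R ⊗[ℂ] R') ⧸ LinearMap.range (barDL R R' i)) →ₗ[ℂ] R',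
      fL ∘ₗ (LinearMap.range (barDL R R' i)).mkQ = actL R R' i ∧ Function.Bijective fL)
    (hRt : ∃ fR : ((R' ⊗[ℂ] R) ⧸ LinearMap.range (barDR R R' i)) →ₗ[ℂ] R',
      fR ∘ₗ (LinearMap.range (barDR R R' i)).mkQ = actR R R' i ∧ Function.Bijective fR)
    (hT : ∃ fT : ((R ⊗[ℂ] (R' ⊗[ℂ] R)) ⧸ twoSidedRel R R' i) →ₗ[ℂ] R',
      fT ∘ₗ (twoSidedRel R R' i).mkQ = actT R R' i ∧ Function.Bijective fT)
    -- the `R'`-module `M`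
    (M : Type) [AddCommGroup M] [Module ℂ M]
    (act' : R' →ₗ[ℂ] M →ₗ[ℂ] M)
    (hact' : ∀ (r s : R') (m : M), act' (r * s) m = act' r (act' s m))
    -- `M` is smooth as an `R`-module via `i`
    (hMR : IsSmoothMod R (act' ∘ₗ i)) :
    IsSmoothMod R' act' := by
  classical
  obtain ⟨fL, hfL, hfLbij⟩ := hL
  obtain ⟨fM, hfM, hfMbij⟩ := hMR
  -- `lift act'` kills the bar relations
  have hkill : (TensorProduct.lift act') ∘ₗ (barDM R' act') = 0 := by
    ext a b m
    simp [barDM, LinearMap.mul'_apply, hact' a b m]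
  have hker' : LinearMap.range (barDM R' act') ≤ LinearMap.ker (TensorProduct.lift act') := by
    rintro x ⟨y, rfl⟩
    simpa using LinearMap.congr_fun hkill y
  set f : ((R' ⊗[ℂ] M) ⧸ LinearMap.range (barDM R' act')) →ₗ[ℂ] M :=
    (LinearMap.range (barDM R' act')).liftQ (TensorProduct.lift act') hker' with hfdef
  have hfmk : f ∘ₗ (LinearMap.range (barDM R' act')).mkQ = TensorProduct.lift act' :=
    Submodule.liftQ_mkQ _ _ _
  -- commuting square : (i ⊗ 1) ∘ barDM_R = barDM_{R'} ∘ (i ⊗ i ⊗ 1)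
  have hcomm : (rTensor M i) ∘ₗ (barDM R (act' ∘ₗ i))
      = (barDM R' act') ∘ₗ (TensorProduct.map i (TensorProduct.map i (LinearMap.id))) := by
    ext a b m
    simp [barDM, LinearMap.mul'_apply, hi a b]
  -- the induced map on quotients
  have hBRle : LinearMap.range (barDM R (act' ∘ₗ i))
      ≤ LinearMap.ker ((LinearMap.range (barDM R' act')).mkQ ∘ₗ rTensor M i) := by
    rintro x ⟨y, rfl⟩
    have h1 : (rTensor M i) ((barDM R (act' ∘ₗ i)) y)
        = (barDM R' act') ((TensorProduct.map i (TensorProduct.map i (LinearMap.id))) y) :=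
      LinearMap.congr_fun hcomm y
    simp only [LinearMap.mem_ker, LinearMap.comp_apply, h1]
    rw [Submodule.mkQ_apply, Submodule.Quotient.mk_eq_zero]
    exact ⟨_, rfl⟩
  set hhat : ((R ⊗[ℂ] M) ⧸ LinearMap.range (barDM R (act' ∘ₗ i)))
      →ₗ[ℂ] ((R' ⊗[ℂ] M) ⧸ LinearMap.range (barDM R' act')) :=
    (LinearMap.range (barDM R (act' ∘ₗ i))).liftQ
      ((LinearMap.range (barDM R' act')).mkQ ∘ₗ rTensor M i) hBRle with hhatdef
  have hhatmk : hhat ∘ₗ (LinearMap.range (barDM R (act' ∘ₗ i))).mkQ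
      = (LinearMap.range (barDM R' act')).mkQ ∘ₗ rTensor M i := Submodule.liftQ_mkQ _ _ _
  -- the equivalence from smoothness over R
  set eM := LinearEquiv.ofBijective fM hfMbij with heMdef
  set g : M →ₗ[ℂ] ((R' ⊗[ℂ] M) ⧸ LinearMap.range (barDM R' act')) :=
    hhat ∘ₗ (eM.symm : M →ₗ[ℂ] _) with hgdef
  -- lift act' ∘ (i ⊗ 1) = lift (act' ∘ i)
  have hlifti : (TensorProduct.lift act') ∘ₗ rTensor M i = TensorProduct.lift (act' ∘ₗ i) := by
    ext r m; simp
  -- f ∘ hhat = fM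
  have hfh : f ∘ₗ hhat = fM := by
    rw [← LinearMap.cancel_right (Submodule.mkQ_surjective (LinearMap.range (barDM R (act' ∘ₗ i))))]
    rw [LinearMap.comp_assoc, hhatmk, ← LinearMap.comp_assoc, hfmk, hlifti, hfM]
  -- f ∘ g = id
  have hfg : f ∘ₗ g = LinearMap.id := by
    ext m
    have h0 : fM (eM.symm m) = eM (eM.symm m) := rfl
    simp only [hgdef, LinearMap.comp_apply, ← LinearMap.comp_apply (f := f), hfh,
      LinearMap.id_apply, LinearEquiv.coe_coe]
    rw [h0, eM.apply_symm_apply]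
  -- key pointwise identity : g (act' (i r) m) = mkQ (i r ⊗ m)
  have hkey : ∀ (r : R) (m : M), g (act' (i r) m)
      = (LinearMap.range (barDM R' act')).mkQ ((i r) ⊗ₜ[ℂ] m) := by
    intro r m
    have h1 : act' (i r) m = fM ((LinearMap.range (barDM R (act' ∘ₗ i))).mkQ (r ⊗ₜ[ℂ] m)) := by
      have := LinearMap.congr_fun hfM (r ⊗ₜ[ℂ] m)
      simpa using this.symm
    have h2 : eM.symm (act' (i r) m) = (LinearMap.range (barDM R (act' ∘ₗ i))).mkQ (r ⊗ₜ[ℂ] m) := by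
      rw [h1]
      exact eM.symm_apply_apply _
    simp only [hgdef, LinearMap.comp_apply, LinearEquiv.coe_coe, h2]
    have := LinearMap.congr_fun hhatmk (r ⊗ₜ[ℂ] m)
    simpa using this
  -- actL is surjective
  have hactLsurj : Function.Surjective (actL R R' i) := by
    intro r'
    obtain ⟨q, hq⟩ := hfLbij.2 r'
    obtain ⟨z, rfl⟩ := Submodule.mkQ_surjective _ q
    exact ⟨z, by rw [← hq, ← LinearMap.comp_apply, hfL]⟩
  have hPhisurj : Function.Surjective (rTensor M (actL R R' i)) :=
    LinearMap.rTensor_surjective M hactLsurj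
  -- g ∘ lift act' = mkQ
  have hgl : g ∘ₗ TensorProduct.lift act' = (LinearMap.range (barDM R' act')).mkQ := by
    rw [← LinearMap.cancel_right hPhisurj]
    apply TensorProduct.ext_threefold
    intro r t' m
    have hactLval : actL R R' i (r ⊗ₜ[ℂ] t') = i r * t' := by
      simp [actL, LinearMap.mul'_apply]
    simp only [LinearMap.comp_apply, rTensor_tmul, hactLval]
    have hL1 : (TensorProduct.lift act') ((i r * t') ⊗ₜ[ℂ] m) = act' (i r) (act' t' m) := by
      simp [hact']
    rw [hL1, hkey r (act' t' m)]
    rw [Submodule.mkQ_apply, Submodule.mkQ_apply, Submodule.Quotient.eq]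
    refine ⟨-((i r) ⊗ₜ[ℂ] (t' ⊗ₜ[ℂ] m)), ?_⟩
    simp only [map_neg]
    have : (barDM R' act') ((i r) ⊗ₜ[ℂ] (t' ⊗ₜ[ℂ] m))
        = (i r * t') ⊗ₜ[ℂ] m - (i r) ⊗ₜ[ℂ] (act' t' m) := by
      simp [barDM, LinearMap.mul'_apply]
    rw [this]
    abel
  -- g ∘ f = id
  have hgf : g ∘ₗ f = LinearMap.id := by
    rw [← LinearMap.cancel_right (Submodule.mkQ_surjective (LinearMap.range (barDM R' act')))]
    rw [LinearMap.comp_assoc, hfmk, hgl, LinearMap.id_comp]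
  refine ⟨f, hfmk, Function.bijective_iff_has_inverse.mpr ⟨g, ?_, ?_⟩⟩
  · intro x; simpa using LinearMap.congr_fun hgf x
  · intro x; simpa using LinearMap.congr_fun hfg x

end Ext
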